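/- arXiv:2506.01603 — 6 statements merged into one kernel-verified Lean document; each statement's English description precedes it below -/
import Mathlib

section
/- Let φ, φ' ∈ (0, π) be fixed angles with φ ≥ φ', and consider points a, b, v, p in the plane with p on the segment ab, ∠avp = φ, ∠bvp = φ', and ‖a−v‖ + ‖v−b‖ = r. Then min{ ‖a−v‖ + ‖p−v‖, ‖b−v‖ + ‖p−v‖ } ≤ cos²(φ'/2) · r. -/
open Set Metric
open scoped ENNReal

noncomputable section

abbrev Euc (N : ℕ) := EuclideanSpace ℝ (Fin N)

open EuclideanGeometry Real

open scoped RealInnerProductSpace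

private lemma key_alg (A B P s s' α β : ℝ) (hA : 0 ≤ A) (hB : 0 ≤ B)
    (hs : 0 ≤ s) (hs' : 0 ≤ s') (hαβ : α ≤ β) (hβ1 : β ≤ 1) (hβ2 : -1 ≤ β)
    (hpos : 0 < A * s + B * s')
    (hid : P * (A * s + B * s') = A * B * (s * β + α * s')) :
    min A B + P ≤ (1 / 2 + β / 2) * (A + B) := by
  rw [← mul_le_mul_iff_left₀ hpos]
  rcases le_total A B with h | h
  · rw [min_eq_left h]
    have hbr : 0 ≤ (1 + β) * B - (1 - β) * A - 2 * α * A := by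
      nlinarith [mul_nonneg hA (sub_nonneg.2 hαβ),
        mul_nonneg (by linarith : (0:ℝ) ≤ 1 + β) (sub_nonneg.2 h)]
    nlinarith [mul_nonneg (mul_nonneg (mul_nonneg (sub_nonneg.2 hβ1) hA) hs) (sub_nonneg.2 h),
      mul_nonneg (mul_nonneg hs' hB) hbr]
  · rw [min_eq_right h]
    have hbr : 0 ≤ A * (1 + β) - B * (1 - β) - 2 * A * α := by
      nlinarith [mul_nonneg hA (sub_nonneg.2 hαβ),
        mul_nonneg (by linarith : (0:ℝ) ≤ 1 - β) (sub_nonneg.2 h)]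
    nlinarith [mul_nonneg (mul_nonneg (mul_nonneg (by linarith : (0:ℝ) ≤ 1 + β) hs) hA)
        (sub_nonneg.2 h),
      mul_nonneg (mul_nonneg hs' hB) hbr]

/-- **Planar trigonometric optimization.** Let `φ ≥ φ'` be angles in `(0,π)` and let
`a, b, v, p` be points in the plane with `p` on the segment `ab`, `∠avp = φ`, `∠bvp = φ'`,
and `‖a−v‖ + ‖v−b‖ = r`. Then
`min(‖a−v‖ + ‖p−v‖, ‖b−v‖ + ‖p−v‖) ≤ cos²(φ'/2)·r`. -/
theorem planar_min_bound (φ φ' r : ℝ)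
    (hφ : φ ∈ Set.Ioo 0 Real.pi) (hφ' : φ' ∈ Set.Ioo 0 Real.pi) (hle : φ' ≤ φ)
    (a b v p : Euc 2) (hp : p ∈ segment ℝ a b)
    (hangle1 : EuclideanGeometry.angle a v p = φ)
    (hangle2 : EuclideanGeometry.angle b v p = φ')
    (hr : dist a v + dist v b = r) :
    min (dist a v + dist p v) (dist b v + dist p v) ≤ Real.cos (φ' / 2) ^ 2 * r := by
  obtain ⟨t1, t2, ht1, ht2, hsum, hpt⟩ := hp
  set x : Euc 2 := a - v with hx
  set y : Euc 2 := b - v with hy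
  set w : Euc 2 := p - v with hwdef
  have hw : w = t1 • x + t2 • y := by
    have hcomb : t1 • x + t2 • y = (t1 • a + t2 • b) - (t1 + t2) • v := by
      rw [hx, hy, add_smul, smul_sub, smul_sub]; abel
    rw [hwdef, hcomb, hsum, one_smul, hpt]
  set A : ℝ := ‖x‖ with hA
  set B : ℝ := ‖y‖ with hB
  set P : ℝ := ‖w‖ with hP
  set α : ℝ := Real.cos φ with hα
  set β : ℝ := Real.cos φ' with hβ
  set s : ℝ := Real.sin φ with hs
  set s' : ℝ := Real.sin φ' with hs'
  have ha1 : InnerProductGeometry.angle x w = φ := hangle1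
  have ha2 : InnerProductGeometry.angle y w = φ' := hangle2
  have h1 : ⟪x, w⟫ = α * (A * P) := by
    rw [hα, ← ha1, ← InnerProductGeometry.cos_angle_mul_norm_mul_norm x w]
  have h2 : ⟪y, w⟫ = β * (B * P) := by
    rw [hβ, ← ha2, ← InnerProductGeometry.cos_angle_mul_norm_mul_norm y w]
  have hspos : 0 < s := Real.sin_pos_of_pos_of_lt_pi hφ.1 hφ.2
  have hs'pos : 0 < s' := Real.sin_pos_of_pos_of_lt_pi hφ'.1 hφ'.2
  have hαβ : α ≤ β := Real.cos_le_cos_of_nonneg_of_le_pi (le_of_lt hφ'.1) (le_of_lt hφ.2) hle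
  have hβ1 : β ≤ 1 := Real.cos_le_one _
  have hβ2 : (-1 : ℝ) ≤ β := Real.neg_one_le_cos _
  have hc : Real.cos (φ' / 2) ^ 2 = 1 / 2 + β / 2 := by
    rw [Real.cos_sq, show 2 * (φ' / 2) = φ' by ring]
  have hda : dist a v = A := dist_eq_norm a v
  have hdb : dist b v = B := dist_eq_norm b v
  have hdp : dist p v = P := dist_eq_norm p v
  have hdvb : dist v b = B := by rw [dist_comm]; exact hdb
  rw [← hr, hda, hdvb, hdb, hdp, hc, min_add_add_right]
  -- goal : min A B + P ≤ (1 / 2 + β / 2) * (A + B)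
  rcases (norm_nonneg w).eq_or_lt with hP0 | hP0
  · -- degenerate case : p = v
    have hw0 : w = 0 := norm_eq_zero.mp hP0.symm
    have hβ0 : β = 0 := by
      rw [hβ, ← ha2, hw0, InnerProductGeometry.angle_zero_right, Real.cos_pi_div_two]
    have hPz : P = 0 := hP0.symm
    rw [hβ0, hPz]
    have h3 := min_le_left A B
    have h4 := min_le_right A B
    linarith
  · -- main case : P > 0
    have hww : P ^ 2 = t1 * ⟪x, w⟫ + t2 * ⟪y, w⟫ := by
      have h := real_inner_self_eq_norm_sq w
      nth_rewrite 1 [hw] at h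
      rw [inner_add_left, real_inner_smul_left, real_inner_smul_left] at h
      linarith
    have e1 : P = t1 * α * A + t2 * β * B := by
      apply mul_right_cancel₀ (ne_of_gt hP0)
      rw [h1, h2] at hww
      linear_combination hww
    have eqII : P ^ 2 - 2 * (t1 * (α * (A * P))) + t1 ^ 2 * A ^ 2 = t2 ^ 2 * B ^ 2 := by
      have hsub : w - t1 • x = t2 • y := by rw [hw]; abel
      have hns := norm_sub_sq_real w (t1 • x)
      rw [hsub] at hns
      have h4 : ‖t2 • y‖ = t2 * B := by
        rw [norm_smul, Real.norm_eq_abs, abs_of_nonneg ht2]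
      have h5 : ⟪w, t1 • x⟫ = t1 * ⟪x, w⟫ := by
        rw [real_inner_smul_right, real_inner_comm]
      have h6 : ‖t1 • x‖ = t1 * A := by
        rw [norm_smul, Real.norm_eq_abs, abs_of_nonneg ht1]
      rw [h4, h5, h6, h1, ← hP] at hns
      linear_combination -hns
    have hs2 : s ^ 2 = 1 - α ^ 2 := by
      have h := Real.sin_sq_add_cos_sq φ; rw [← hs, ← hα] at h; linarith
    have hs'2 : s' ^ 2 = 1 - β ^ 2 := by
      have h := Real.sin_sq_add_cos_sq φ'; rw [← hs', ← hβ] at h; linarith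
    have esq : (t1 * A * s) ^ 2 = (t2 * B * s') ^ 2 := by
      linear_combination t1 ^ 2 * A ^ 2 * hs2 - t2 ^ 2 * B ^ 2 * hs'2 + eqII -
        (P - t1 * α * A + t2 * β * B) * e1
    have e2 : t1 * A * s = t2 * B * s' :=
      (sq_eq_sq₀ (mul_nonneg (mul_nonneg ht1 (norm_nonneg x)) hspos.le)
        (mul_nonneg (mul_nonneg ht2 (norm_nonneg y)) hs'pos.le)).mp esq
    have hid : P * (A * s + B * s') = A * B * (s * β + α * s') := by
      linear_combination (A * s + B * s') * e1 + (α * A - β * B) * e2 +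
        A * B * (α * s' + β * s) * hsum
    have hABpos : 0 < A * s + B * s' := by
      rcases eq_or_lt_of_le (norm_nonneg x) with hA0 | hA0
      · rcases eq_or_lt_of_le (norm_nonneg y) with hB0 | hB0
        · exfalso
          have hx0 : x = 0 := norm_eq_zero.mp hA0.symm
          have hy0 : y = 0 := norm_eq_zero.mp hB0.symm
          rw [hx0, hy0, smul_zero, smul_zero, add_zero] at hw
          rw [hw, norm_zero] at hP0
          exact lt_irrefl 0 hP0
        · have h7 : 0 ≤ A * s := mul_nonneg (norm_nonneg x) hspos.le
          have h8 : 0 < B * s' := mul_pos hB0 hs'pos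
          linarith
      · have h7 : 0 < A * s := mul_pos hA0 hspos
        have h8 : 0 ≤ B * s' := mul_nonneg (norm_nonneg y) hs'pos.le
        linarith
    exact key_alg A B P s s' α β (norm_nonneg x) (norm_nonneg y) hspos.le hs'pos.le
      hαβ hβ1 hβ2 hABpos hid
end
end

section
/- In the configuration of the previous trigonometric lemma (p on segment ab, ∠bvp = φ' with φ' ≤ φ = ∠avp), if q is a point at Euclidean distance at most ε from the line through a and b, and q lies on the ray from v through p, then ‖p−q‖ ≤ ε / √(2(1 − cos²(φ'/2))) = ε / sin(φ'). -/
open Set Metric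
open scoped ENNReal

noncomputable section

open EuclideanGeometry Real

lemma sin_aux' {x y : ℝ} (hx0 : 0 ≤ x) (hxy : x ≤ y) (hy : y ≤ Real.pi - x) :
    Real.sin x ≤ Real.sin y := by
  rcases le_or_gt y (Real.pi / 2) with h | h
  · exact Real.sin_le_sin_of_le_of_le_pi_div_two (by linarith [Real.pi_pos]) h hxy
  · rw [← Real.sin_pi_sub y]
    exact Real.sin_le_sin_of_le_of_le_pi_div_two (by linarith [Real.pi_pos]) (by linarith)
      (by linarith)

lemma perp_aux' {E : Type*} [NormedAddCommGroup E] [InnerProductSpace ℝ E]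
    (u d : E) (c : ℝ) :
    ‖u‖ * Real.sin (InnerProductGeometry.angle u d) ≤ ‖u - c • d‖ := by
  rcases eq_or_ne d 0 with rfl | hd
  · simp [InnerProductGeometry.angle_zero_right]
  · have hdpos : (0:ℝ) < ‖d‖ := norm_pos_iff.2 hd
    rw [← mul_le_mul_iff_of_pos_right hdpos]
    have key := InnerProductGeometry.sin_angle_mul_norm_mul_norm u d
    have h1 : ‖u‖ * Real.sin (InnerProductGeometry.angle u d) * ‖d‖
        = Real.sqrt ((inner ℝ u u : ℝ) * (inner ℝ d d : ℝ) - (inner ℝ u d : ℝ) * (inner ℝ u d : ℝ)) := by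
      rw [← key]; ring
    rw [h1]
    rw [show ‖u - c • d‖ * ‖d‖ = Real.sqrt ((‖u - c • d‖ * ‖d‖)^2) from
      (Real.sqrt_sq (by positivity)).symm]
    apply Real.sqrt_le_sqrt
    have e1 : (inner ℝ u u : ℝ) = ‖u‖^2 := real_inner_self_eq_norm_sq u
    have e2 : (inner ℝ d d : ℝ) = ‖d‖^2 := real_inner_self_eq_norm_sq d
    have e3 : ‖u - c • d‖^2 = ‖u‖^2 - 2 * (c * (inner ℝ u d : ℝ)) + c^2 * ‖d‖^2 := by
      rw [norm_sub_sq_real, real_inner_smul_right, norm_smul]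
      simp [mul_pow]
    nlinarith [sq_nonneg (c * ‖d‖^2 - (inner ℝ u d : ℝ))]

/-- **Perpendicular offset bound.** In the configuration of the planar trigonometric lemma
(`p` on segment `ab`, `∠avp = φ`, `∠bvp = φ'` with `φ' ≤ φ`, and `θ = ∠apv ∈ (φ', π−φ)`),
if `q` is within Euclidean distance `ε` of the line through `a` and `b` and `q` lies on the
ray from `v` through `p`, then `‖p−q‖ ≤ ε / sin φ'`. -/
theorem planar_perp_bound (φ φ' ε : ℝ)
    (hφ : φ ∈ Set.Ioo 0 Real.pi) (hφ' : φ' ∈ Set.Ioo 0 Real.pi) (hle : φ' ≤ φ)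
    (a b v p q : Euc 2) (hp : p ∈ segment ℝ a b)
    (hangle1 : EuclideanGeometry.angle a v p = φ)
    (hangle2 : EuclideanGeometry.angle b v p = φ')
    (hθ : φ' < EuclideanGeometry.angle a p v ∧
      EuclideanGeometry.angle a p v < Real.pi - φ)
    (hray : ∃ t : ℝ, 0 ≤ t ∧ q = v + t • (p - v))
    (hq : Metric.infDist q (affineSpan ℝ {a, b} : Set (Euc 2)) ≤ ε) :
    dist p q ≤ ε / Real.sin φ' := by
  obtain ⟨t, ht0, hqdef⟩ := hray
  have hsin' : 0 < Real.sin φ' := Real.sin_pos_of_pos_of_lt_pi hφ'.1 hφ'.2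
  have hε : 0 ≤ ε := le_trans Metric.infDist_nonneg hq
  by_cases hqp : q = p
  · rw [hqp]
    simp only [dist_self]
    positivity
  -- q ≠ p, hence t ≠ 1 and p ≠ v
  have hpv : p ≠ v := by
    rintro rfl
    apply hqp
    rw [hqdef]; simp
  have ht1 : t ≠ 1 := by
    rintro rfl
    apply hqp
    rw [hqdef]; simp
  -- p ≠ a
  have hpa : p ≠ a := by
    rintro rfl
    rw [EuclideanGeometry.angle_comm, EuclideanGeometry.angle_self_of_ne hpv] at hangle1
    exact absurd hangle1.symm (ne_of_gt hφ.1)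
  -- p ≠ b
  have hpb : p ≠ b := by
    rintro rfl
    rw [EuclideanGeometry.angle_comm, EuclideanGeometry.angle_self_of_ne hpv] at hangle2
    exact absurd hangle2.symm (ne_of_gt hφ'.1)
  -- get σ with p - a = σ • (b - a)
  rw [segment_eq_image] at hp
  obtain ⟨σ, hσmem, hpdef⟩ := hp
  set d : Euc 2 := b - a with hd_def
  have hpa' : p - a = σ • d := by rw [← hpdef, hd_def]; module
  have hσpos : 0 < σ := by
    rcases lt_or_eq_of_le hσmem.1 with h | h
    · exact h
    · exfalso; apply hpa; rw [← sub_eq_zero, hpa', ← h, zero_smul]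
  -- the ray vector
  set u : Euc 2 := q - p with hu_def
  have hu : u = (t - 1) • (p - v) := by rw [hu_def, hqdef]; module
  -- angle computations
  set β : ℝ := InnerProductGeometry.angle (v - p) d with hβ_def
  have hθeq : EuclideanGeometry.angle a p v = Real.pi - β := by
    have h1 : EuclideanGeometry.angle a p v
        = InnerProductGeometry.angle (a - p) (v - p) := rfl
    rw [h1, show a - p = (-σ) • d by rw [neg_smul, ← hpa']; abel,
      InnerProductGeometry.angle_smul_left_of_neg d (v - p) (neg_neg_iff_pos.2 hσpos),
      InnerProductGeometry.angle_neg_left, InnerProductGeometry.angle_comm]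
  have hβ1 : φ < β := by linarith [hθ.2, hθeq ▸ hθ.2]
  have hβ2 : β < Real.pi - φ' := by
    have := hθ.1
    rw [hθeq] at this
    linarith
  -- sin of the angle between u and d
  have hsinangle : Real.sin φ' ≤ Real.sin (InnerProductGeometry.angle u d) := by
    have hβbound : Real.sin φ' ≤ Real.sin β :=
      sin_aux' (le_of_lt hφ'.1) (by linarith) (by linarith)
    rcases lt_or_gt_of_ne ht1 with h | h
    · -- t < 1 : u = (t-1)•(p-v), negative coefficient
      rw [hu, InnerProductGeometry.angle_smul_left_of_neg _ _ (by linarith : t - 1 < 0),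
        show -(p - v) = v - p by abel]
      exact hβbound
    · -- t > 1
      rw [hu, InnerProductGeometry.angle_smul_left_of_pos _ _ (by linarith : (0:ℝ) < t - 1),
        show p - v = -(v - p) by abel, InnerProductGeometry.angle_neg_left, Real.sin_pi_sub]
      exact hβbound
  -- lower bound on distances to points of the line
  have hbound : ∀ y ∈ (affineSpan ℝ {a, b} : Set (Euc 2)),
      dist p q * Real.sin φ' ≤ dist q y := by
    intro y hy
    have hy' : (y - a) +ᵥ a ∈ line[ℝ, a, b] := by
      simpa [vadd_eq_add, sub_add_cancel] using hy
    rw [vadd_left_mem_affineSpan_pair] at hy'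
    obtain ⟨r, hr⟩ := hy'
    have hr' : y - a = r • d := by rw [← hr]; simp [hd_def, vsub_eq_sub]
    have hqy : q - y = u - (r - σ) • d := by
      have : q - y = u + (p - a) - (y - a) := by rw [hu_def]; abel
      rw [this, hpa', hr']; module
    have h1 : dist q y = ‖u - (r - σ) • d‖ := by
      rw [dist_eq_norm, hqy]
    have h2 : dist p q = ‖u‖ := by
      rw [dist_eq_norm, hu_def, ← norm_neg]; congr 1; abel
    rw [h1, h2]
    calc ‖u‖ * Real.sin φ' ≤ ‖u‖ * Real.sin (InnerProductGeometry.angle u d) := by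
          apply mul_le_mul_of_nonneg_left hsinangle (norm_nonneg u)
      _ ≤ ‖u - (r - σ) • d‖ := perp_aux' u d (r - σ)
  -- conclude
  have hne : (affineSpan ℝ {a, b} : Set (Euc 2)).Nonempty :=
    ⟨a, left_mem_affineSpan_pair ℝ a b⟩
  have hlow : dist p q * Real.sin φ' ≤ Metric.infDist q (affineSpan ℝ {a, b} : Set (Euc 2)) := by
    by_contra hlt
    push_neg at hlt
    obtain ⟨y, hy, hdy⟩ := (Metric.infDist_lt_iff hne).1 hlt
    exact absurd hdy (not_lt.2 (hbound y hy))
  rw [le_div_iff₀ hsin']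
  exact hlow.trans hq
end
end

section
/- For angles φ, φ' ∈ (0, π) with φ ≥ φ', the function x(θ) = [1/sin θ + 1/sin(θ+φ)] / [1/sin(θ+φ) + 1/sin(θ−φ')] is strictly increasing on the interval (φ', π/2 − (φ−φ')/2]. -/
open Set Metric
open scoped ENNReal

noncomputable section

/-- Algebraic identity for the numerator of the derivative of the quotient. -/
lemma x_deriv_num_eq (s1 s2 s3 c1 c2 c3 : ℝ) (h1 : s1 ≠ 0) (h2 : s2 ≠ 0) (h3 : s3 ≠ 0) :
    (-c1 / s1 ^ 2 + -c2 / s2 ^ 2) * (1 / s2 + 1 / s3) -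
        (1 / s1 + 1 / s2) * (-c2 / s2 ^ 2 + -c3 / s3 ^ 2) =
      ((s1 * c3 - c1 * s3) * s2 ^ 2 + (s2 * c3 - c2 * s3) * s1 ^ 2 -
          (s2 * c1 - c2 * s1) * s3 ^ 2) / (s1 ^ 2 * s2 ^ 2 * s3 ^ 2) := by
  field_simp
  ring

set_option maxHeartbeats 1000000 in
/-- **Monotonicity lemma (increasing branch).** For angles `φ ≥ φ'` in `(0,π)`, the function
`x(θ) = [1/sin θ + 1/sin(θ+φ)] / [1/sin(θ+φ) + 1/sin(θ−φ')]` is strictly increasing on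
`(φ', π/2 − (φ−φ')/2]`. -/
theorem x_strict_mono (φ φ' : ℝ)
    (hφ : φ ∈ Set.Ioo 0 Real.pi) (hφ' : φ' ∈ Set.Ioo 0 Real.pi) (hle : φ' ≤ φ) :
    StrictMonoOn
      (fun θ : ℝ =>
        (1 / Real.sin θ + 1 / Real.sin (θ + φ)) /
          (1 / Real.sin (θ + φ) + 1 / Real.sin (θ - φ')))
      (Set.Ioc φ' (Real.pi / 2 - (φ - φ') / 2)) := by
  obtain ⟨hφ0, hφπ⟩ := hφ
  obtain ⟨hφ'0, hφ'π⟩ := hφ'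
  have hπ := Real.pi_pos
  by_cases hne : φ' < Real.pi / 2 - (φ - φ') / 2
  swap
  · intro x hx
    exact absurd hx.2 (not_le.mpr (lt_of_le_of_lt (not_lt.mp hne) hx.1))
  have hsum : φ + φ' < Real.pi := by linarith
  -- basic positivity of the sines on the interval
  have hsin : ∀ θ ∈ Set.Ioc φ' (Real.pi / 2 - (φ - φ') / 2),
      0 < Real.sin θ ∧ 0 < Real.sin (θ + φ) ∧ 0 < Real.sin (θ - φ') := by
    intro θ ⟨h1, h2⟩
    exact ⟨Real.sin_pos_of_pos_of_lt_pi (by linarith) (by linarith),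
      Real.sin_pos_of_pos_of_lt_pi (by linarith) (by linarith),
      Real.sin_pos_of_pos_of_lt_pi (by linarith) (by linarith)⟩
  -- derivative at every point of the interval
  have key : ∀ θ ∈ Set.Ioc φ' (Real.pi / 2 - (φ - φ') / 2),
      HasDerivAt (fun θ : ℝ =>
        (1 / Real.sin θ + 1 / Real.sin (θ + φ)) /
          (1 / Real.sin (θ + φ) + 1 / Real.sin (θ - φ')))
        (((-Real.cos θ / Real.sin θ ^ 2 + -Real.cos (θ + φ) / Real.sin (θ + φ) ^ 2) *
              (1 / Real.sin (θ + φ) + 1 / Real.sin (θ - φ')) -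
            (1 / Real.sin θ + 1 / Real.sin (θ + φ)) *
              (-Real.cos (θ + φ) / Real.sin (θ + φ) ^ 2 +
                -Real.cos (θ - φ') / Real.sin (θ - φ') ^ 2)) /
          (1 / Real.sin (θ + φ) + 1 / Real.sin (θ - φ')) ^ 2) θ := by
    intro θ hθ
    obtain ⟨hs1, hs2, hs3⟩ := hsin θ hθ
    have h1 : HasDerivAt (fun x : ℝ => 1 / Real.sin x) (-Real.cos θ / Real.sin θ ^ 2) θ := by
      simpa [one_div, Pi.inv_def] using (Real.hasDerivAt_sin θ).inv hs1.ne'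
    have h2 : HasDerivAt (fun x : ℝ => 1 / Real.sin (x + φ))
        (-Real.cos (θ + φ) / Real.sin (θ + φ) ^ 2) θ := by
      have := (((hasDerivAt_id θ).add_const φ).sin).inv hs2.ne'
      simpa [one_div, Pi.inv_def] using this
    have h3 : HasDerivAt (fun x : ℝ => 1 / Real.sin (x - φ'))
        (-Real.cos (θ - φ') / Real.sin (θ - φ') ^ 2) θ := by
      have := (((hasDerivAt_id θ).sub_const φ').sin).inv hs3.ne'
      simpa [one_div, Pi.inv_def] using this
    have hD : 1 / Real.sin (θ + φ) + 1 / Real.sin (θ - φ') ≠ 0 :=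
      (add_pos (one_div_pos.mpr hs2) (one_div_pos.mpr hs3)).ne'
    exact (h1.add h2).div (h2.add h3) hD
  apply strictMonoOn_of_deriv_pos (convex_Ioc _ _)
  · exact fun θ hθ => (key θ hθ).continuousAt.continuousWithinAt
  · intro θ hθ
    rw [interior_Ioc] at hθ
    have hθ' : θ ∈ Set.Ioc φ' (Real.pi / 2 - (φ - φ') / 2) := Set.Ioo_subset_Ioc_self hθ
    have hθ1 : φ' < θ := hθ.1
    have hθ2 : θ ≤ Real.pi / 2 - (φ - φ') / 2 := le_of_lt hθ.2
    obtain ⟨hs1, hs2, hs3⟩ := hsin θ hθ'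
    rw [(key θ hθ').deriv]
    have hDpos : 0 < 1 / Real.sin (θ + φ) + 1 / Real.sin (θ - φ') :=
      add_pos (one_div_pos.mpr hs2) (one_div_pos.mpr hs3)
    apply div_pos _ (pow_pos hDpos 2)
    rw [x_deriv_num_eq _ _ _ _ _ _ hs1.ne' hs2.ne' hs3.ne']
    -- rewrite the sine differences as single sines
    have e1 : Real.sin φ = Real.sin (θ + φ) * Real.cos θ - Real.cos (θ + φ) * Real.sin θ := by
      rw [← Real.sin_sub]; congr 1; ring
    have e2 : Real.sin φ' =
        Real.sin θ * Real.cos (θ - φ') - Real.cos θ * Real.sin (θ - φ') := by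
      rw [← Real.sin_sub]; congr 1; ring
    have e3 : Real.sin (φ + φ') =
        Real.sin (θ + φ) * Real.cos (θ - φ') - Real.cos (θ + φ) * Real.sin (θ - φ') := by
      rw [← Real.sin_sub]; congr 1; ring
    rw [← e1, ← e2, ← e3]
    apply div_pos _ (mul_pos (mul_pos (pow_pos hs1 2) (pow_pos hs2 2)) (pow_pos hs3 2))
    -- now the key trigonometric inequality
    have hmem1 : θ ∈ Set.Icc (-(Real.pi / 2)) (Real.pi / 2) :=
      ⟨by linarith, by linarith⟩
    have hmem3 : θ - φ' ∈ Set.Icc (-(Real.pi / 2)) (Real.pi / 2) :=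
      ⟨by linarith, by linarith⟩
    have h13 : Real.sin (θ - φ') < Real.sin θ :=
      Real.strictMonoOn_sin hmem3 hmem1 (by linarith)
    have h32 : Real.sin (θ - φ') ≤ Real.sin (θ + φ) := by
      by_cases h : θ + φ ≤ Real.pi / 2
      · exact Real.strictMonoOn_sin.monotoneOn hmem3 ⟨by linarith, h⟩ (by linarith)
      · rw [show Real.sin (θ + φ) = Real.sin (Real.pi - (θ + φ)) by rw [Real.sin_pi_sub]]
        exact Real.strictMonoOn_sin.monotoneOn hmem3 ⟨by linarith, by linarith⟩ (by linarith)
    have hE2 : Real.sin φ' * Real.sin (θ - φ') ^ 2 ≤ Real.sin φ' * Real.sin (θ + φ) ^ 2 := by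
      apply mul_le_mul_of_nonneg_left _ (le_of_lt (Real.sin_pos_of_pos_of_lt_pi hφ'0 hφ'π))
      nlinarith
    have hcc : 0 < Real.cos ((φ + φ') / 2) :=
      Real.cos_pos_of_mem_Ioo ⟨by linarith, by linarith⟩
    have hA : Real.sin ((φ - φ') / 2) < Real.sin ((φ + φ') / 2) :=
      Real.strictMonoOn_sin ⟨by linarith, by linarith⟩ ⟨by linarith, by linarith⟩ (by linarith)
    have hA0 : 0 ≤ Real.sin ((φ - φ') / 2) :=
      Real.sin_nonneg_of_nonneg_of_le_pi (by linarith) (by linarith)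
    have hinner : Real.sin ((φ - φ') / 2) * Real.sin (θ - φ') ^ 2 <
        Real.sin ((φ + φ') / 2) * Real.sin θ ^ 2 :=
      calc Real.sin ((φ - φ') / 2) * Real.sin (θ - φ') ^ 2
          ≤ Real.sin ((φ - φ') / 2) * Real.sin θ ^ 2 :=
            mul_le_mul_of_nonneg_left (by nlinarith) hA0
        _ < Real.sin ((φ + φ') / 2) * Real.sin θ ^ 2 :=
            mul_lt_mul_of_pos_right hA (pow_pos hs1 2)
    have hkey : 0 < Real.cos ((φ + φ') / 2) *
        (Real.sin ((φ + φ') / 2) * Real.sin θ ^ 2 -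
          Real.sin ((φ - φ') / 2) * Real.sin (θ - φ') ^ 2) :=
      mul_pos hcc (by linarith)
    have hφeq : Real.sin φ = Real.sin φ' +
        2 * Real.sin ((φ - φ') / 2) * Real.cos ((φ + φ') / 2) := by
      linarith [Real.sin_sub_sin φ φ']
    have hsumsin : Real.sin (φ + φ') =
        2 * Real.sin ((φ + φ') / 2) * Real.cos ((φ + φ') / 2) := by
      rw [show φ + φ' = 2 * ((φ + φ') / 2) by ring, Real.sin_two_mul]
      norm_num
    rw [hφeq, hsumsin]
    nlinarith [hkey, hE2]
end
end

section
/- For angles φ, φ' ∈ (0, π) with φ ≥ φ', the function y(θ) = [1/sin θ + 1/sin(θ−φ')] / [1/sin(θ+φ) + 1/sin(θ−φ')] is strictly decreasing on the interval [π/2 − (φ−φ')/2, π − φ). -/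
open Set Metric
open scoped ENNReal

noncomputable section

private lemma sin_sq_sub' (x y : ℝ) :
    Real.sin x ^ 2 - Real.sin y ^ 2 = Real.sin (x + y) * Real.sin (x - y) := by
  rw [Real.sin_add, Real.sin_sub]
  nlinarith [Real.sin_sq_add_cos_sq x, Real.sin_sq_add_cos_sq y]

private lemma keyE (φ φ' θ : ℝ) (hφ0 : 0 < φ) (hφ'0 : 0 < φ')
    (hle : φ' ≤ φ) (hθ1 : Real.pi / 2 - (φ - φ') / 2 ≤ θ) (hθ2 : θ < Real.pi - φ) :
    Real.sin (θ + φ) ^ 2 * Real.sin φ' - Real.sin (θ - φ') ^ 2 * Real.sin φ -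
      Real.sin θ ^ 2 * Real.sin (φ + φ') < 0 := by
  have hπ := Real.pi_pos
  have hsq : Real.sin (θ + φ) ^ 2 =
      Real.sin (θ - φ') ^ 2 + Real.sin (2 * θ + φ - φ') * Real.sin (φ + φ') := by
    have h := sin_sq_sub' (θ + φ) (θ - φ')
    rw [show θ + φ + (θ - φ') = 2 * θ + φ - φ' by ring,
        show θ + φ - (θ - φ') = φ + φ' by ring] at h
    linarith
  have hS : Real.sin (2 * θ + φ - φ') ≤ 0 := by
    have h := Real.sin_nonneg_of_nonneg_of_le_pi (x := 2 * θ + φ - φ' - Real.pi)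
      (by linarith) (by linarith)
    rw [Real.sin_sub_pi] at h
    linarith
  have hmono : Real.sin φ' ≤ Real.sin φ := by
    have h := Real.sin_sub_sin φ φ'
    have h1 : 0 ≤ Real.sin ((φ - φ') / 2) :=
      Real.sin_nonneg_of_nonneg_of_le_pi (by linarith) (by linarith)
    have h2 : 0 ≤ Real.cos ((φ + φ') / 2) :=
      Real.cos_nonneg_of_mem_Icc ⟨by linarith, by linarith⟩
    nlinarith
  have ha : 0 < Real.sin θ := Real.sin_pos_of_pos_of_lt_pi (by linarith) (by linarith)
  have hs : 0 < Real.sin (φ + φ') := Real.sin_pos_of_pos_of_lt_pi (by linarith) (by linarith)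
  have hφ's : 0 < Real.sin φ' := Real.sin_pos_of_pos_of_lt_pi (by linarith) (by linarith)
  nlinarith [sq_nonneg (Real.sin (θ - φ')), mul_pos hs (mul_pos ha ha),
    mul_nonneg (sq_nonneg (Real.sin (θ - φ'))) (sub_nonneg.2 hmono),
    mul_pos hs hφ's, mul_nonneg (mul_pos hs hφ's).le (neg_nonneg.2 hS)]

private lemma sins_pos (φ φ' θ : ℝ) (hφ0 : 0 < φ) (hφ'0 : 0 < φ')
    (hθ1 : Real.pi / 2 - (φ - φ') / 2 ≤ θ) (hθ2 : θ < Real.pi - φ) :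
    0 < Real.sin θ ∧ 0 < Real.sin (θ - φ') ∧ 0 < Real.sin (θ + φ) := by
  have hπ := Real.pi_pos
  refine ⟨Real.sin_pos_of_pos_of_lt_pi (by linarith) (by linarith),
    Real.sin_pos_of_pos_of_lt_pi (by linarith) (by linarith),
    Real.sin_pos_of_pos_of_lt_pi (by linarith) (by linarith)⟩

private lemma hasDeriv_main (φ φ' θ : ℝ) (ha : Real.sin θ ≠ 0) (hb : Real.sin (θ - φ') ≠ 0)
    (hc : Real.sin (θ + φ) ≠ 0)
    (hD : 1 / Real.sin (θ + φ) + 1 / Real.sin (θ - φ') ≠ 0) :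
    HasDerivAt (fun θ : ℝ =>
        (1 / Real.sin θ + 1 / Real.sin (θ - φ')) /
          (1 / Real.sin (θ + φ) + 1 / Real.sin (θ - φ')))
      (((-Real.cos θ / Real.sin θ ^ 2 + -Real.cos (θ - φ') / Real.sin (θ - φ') ^ 2) *
          (1 / Real.sin (θ + φ) + 1 / Real.sin (θ - φ')) -
        (1 / Real.sin θ + 1 / Real.sin (θ - φ')) *
          (-Real.cos (θ + φ) / Real.sin (θ + φ) ^ 2 +
            -Real.cos (θ - φ') / Real.sin (θ - φ') ^ 2)) /
        (1 / Real.sin (θ + φ) + 1 / Real.sin (θ - φ')) ^ 2) θ := by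
  have h1 : HasDerivAt (fun t : ℝ => Real.sin t) (Real.cos θ) θ := Real.hasDerivAt_sin θ
  have h2 : HasDerivAt (fun t : ℝ => Real.sin (t - φ')) (Real.cos (θ - φ')) θ := by
    simpa [Function.comp_def] using (Real.hasDerivAt_sin (θ - φ')).comp θ ((hasDerivAt_id θ).sub_const φ')
  have h3 : HasDerivAt (fun t : ℝ => Real.sin (t + φ)) (Real.cos (θ + φ)) θ := by
    simpa [Function.comp_def] using (Real.hasDerivAt_sin (θ + φ)).comp θ ((hasDerivAt_id θ).add_const φ)
  have i1 : HasDerivAt (fun t : ℝ => 1 / Real.sin t) (-Real.cos θ / Real.sin θ ^ 2) θ := by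
    simpa [one_div, div_eq_mul_inv, Pi.inv_def] using h1.inv ha
  have i2 : HasDerivAt (fun t : ℝ => 1 / Real.sin (t - φ'))
      (-Real.cos (θ - φ') / Real.sin (θ - φ') ^ 2) θ := by
    simpa [one_div, div_eq_mul_inv, Pi.inv_def] using h2.inv hb
  have i3 : HasDerivAt (fun t : ℝ => 1 / Real.sin (t + φ))
      (-Real.cos (θ + φ) / Real.sin (θ + φ) ^ 2) θ := by
    simpa [one_div, div_eq_mul_inv, Pi.inv_def] using h3.inv hc
  exact (i1.add i2).div (i3.add i2) hD

/-- **Monotonicity lemma (decreasing branch).** For angles `φ ≥ φ'` in `(0,π)`, the function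
`y(θ) = [1/sin θ + 1/sin(θ−φ')] / [1/sin(θ+φ) + 1/sin(θ−φ')]` is strictly decreasing on
`[π/2 − (φ−φ')/2, π − φ)`. -/
theorem y_strict_anti (φ φ' : ℝ)
    (hφ : φ ∈ Set.Ioo 0 Real.pi) (hφ' : φ' ∈ Set.Ioo 0 Real.pi) (hle : φ' ≤ φ) :
    StrictAntiOn
      (fun θ : ℝ =>
        (1 / Real.sin θ + 1 / Real.sin (θ - φ')) /
          (1 / Real.sin (θ + φ) + 1 / Real.sin (θ - φ')))
      (Set.Ico (Real.pi / 2 - (φ - φ') / 2) (Real.pi - φ)) := by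
  obtain ⟨hφ0, hφπ⟩ := hφ
  obtain ⟨hφ'0, hφ'π⟩ := hφ'
  by_cases hne : Real.pi / 2 - (φ - φ') / 2 < Real.pi - φ
  case neg =>
    intro x hx y hy hxy
    exact absurd (lt_of_le_of_lt hx.1 hx.2) hne
  -- the interval is nonempty, so φ + φ' < π
  apply strictAntiOn_of_deriv_neg (convex_Ico _ _)
  · -- continuity
    have key : ∀ θ ∈ Set.Ico (Real.pi / 2 - (φ - φ') / 2) (Real.pi - φ),
        Real.sin θ ≠ 0 ∧ Real.sin (θ - φ') ≠ 0 ∧ Real.sin (θ + φ) ≠ 0 ∧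
        1 / Real.sin (θ + φ) + 1 / Real.sin (θ - φ') ≠ 0 := by
      intro θ hθ
      obtain ⟨ha, hb, hc⟩ := sins_pos φ φ' θ hφ0 hφ'0 hθ.1 hθ.2
      exact ⟨ha.ne', hb.ne', hc.ne',
        (add_pos (one_div_pos.2 hc) (one_div_pos.2 hb)).ne'⟩
    have hsin : Continuous fun θ : ℝ => Real.sin θ := Real.continuous_sin
    apply ContinuousOn.div
    · exact ContinuousOn.add
        (ContinuousOn.div continuousOn_const hsin.continuousOn
          (fun θ hθ => (key θ hθ).1))
        (ContinuousOn.div continuousOn_const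
          ((hsin.comp (continuous_id.sub continuous_const)).continuousOn)
          (fun θ hθ => (key θ hθ).2.1))
    · exact ContinuousOn.add
        (ContinuousOn.div continuousOn_const
          ((hsin.comp (continuous_id.add continuous_const)).continuousOn)
          (fun θ hθ => (key θ hθ).2.2.1))
        (ContinuousOn.div continuousOn_const
          ((hsin.comp (continuous_id.sub continuous_const)).continuousOn)
          (fun θ hθ => (key θ hθ).2.1))
    · exact fun θ hθ => (key θ hθ).2.2.2
  · -- derivative negative on the interior
    intro θ hθ
    rw [interior_Ico] at hθ
    obtain ⟨hθ1, hθ2⟩ := hθ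
    obtain ⟨ha, hb, hc⟩ := sins_pos φ φ' θ hφ0 hφ'0 hθ1.le hθ2
    have hDpos : 0 < 1 / Real.sin (θ + φ) + 1 / Real.sin (θ - φ') :=
      add_pos (one_div_pos.2 hc) (one_div_pos.2 hb)
    have hder := hasDeriv_main φ φ' θ ha.ne' hb.ne' hc.ne' hDpos.ne'
    rw [hder.deriv]
    apply div_neg_of_neg_of_pos _ (pow_pos hDpos 2)
    -- numerator is negative
    set a := Real.sin θ
    set b := Real.sin (θ - φ')
    set c := Real.sin (θ + φ)
    set A := Real.cos θ
    set B := Real.cos (θ - φ')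
    set C := Real.cos (θ + φ)
    have hE : b ^ 2 * (a * C - c * A) + c ^ 2 * (a * B - b * A) +
        a ^ 2 * (b * C - c * B) < 0 := by
      have e1 : a * C - c * A = -Real.sin φ := by
        have := Real.sin_sub θ (θ + φ)
        rw [show θ - (θ + φ) = -φ by ring, Real.sin_neg] at this
        simp only [a, c, A, C]; linarith
      have e2 : a * B - b * A = Real.sin φ' := by
        have := Real.sin_sub θ (θ - φ')
        rw [show θ - (θ - φ') = φ' by ring] at this
        simp only [a, b, A, B]; linarith
      have e3 : b * C - c * B = -Real.sin (φ + φ') := by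
        have := Real.sin_sub (θ - φ') (θ + φ)
        rw [show θ - φ' - (θ + φ) = -(φ + φ') by ring, Real.sin_neg] at this
        simp only [b, c, B, C]; linarith
      rw [e1, e2, e3]
      have := keyE φ φ' θ hφ0 hφ'0 hle hθ1.le hθ2
      nlinarith
    have hfact : ((-A / a ^ 2 + -B / b ^ 2) * (1 / c + 1 / b) -
        (1 / a + 1 / b) * (-C / c ^ 2 + -B / b ^ 2)) * (a * b * c) ^ 2 =
        b ^ 2 * (a * C - c * A) + c ^ 2 * (a * B - b * A) + a ^ 2 * (b * C - c * B) := by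
      field_simp
      ring
    nlinarith [pow_pos (mul_pos (mul_pos ha hb) hc) 2]
end
end

section
/- Let p, q, v be points in the Euclidean plane with ∠pvq = γ ∈ (0, π). Then ‖p−v‖ + ‖q−v‖ ≤ ‖p−q‖ / sin(γ/2). -/
open Set Metric
open scoped ENNReal

noncomputable section

/-- **Two-sides bound.** For points `p, q, v` in the Euclidean plane with
`∠pvq = γ ∈ (0, π)`, one has `‖p−v‖ + ‖q−v‖ ≤ ‖p−q‖ / sin(γ/2)`. -/
theorem sum_sides_le (p q v : Euc 2) (γ : ℝ) (hγ : γ ∈ Set.Ioo 0 Real.pi)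
    (hangle : EuclideanGeometry.angle p v q = γ) :
    dist p v + dist q v ≤ dist p q / Real.sin (γ / 2) := by
  obtain ⟨h0, hπ⟩ := hγ
  have hs : 0 < Real.sin (γ / 2) :=
    Real.sin_pos_of_pos_of_lt_pi (by linarith) (by linarith [Real.pi_pos])
  rw [le_div_iff₀ hs]
  -- law of cosines
  have hlc := EuclideanGeometry.law_cos p v q
  rw [hangle] at hlc
  set a := dist p v
  set b := dist q v
  set c := dist p q
  have ha : 0 ≤ a := dist_nonneg
  have hb : 0 ≤ b := dist_nonneg
  have hc : 0 ≤ c := dist_nonneg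
  -- sin(γ/2)^2 = (1 - cos γ)/2
  have hhalf : Real.sin (γ / 2) ^ 2 = (1 - Real.cos γ) / 2 := by
    have h2 : Real.cos γ = 2 * Real.cos (γ / 2) ^ 2 - 1 := by
      rw [← Real.cos_two_mul]; ring_nf
    have h3 : Real.sin (γ / 2) ^ 2 + Real.cos (γ / 2) ^ 2 = 1 :=
      Real.sin_sq_add_cos_sq _
    linarith
  have hcos : -1 ≤ Real.cos γ := Real.neg_one_le_cos γ
  have hkey : ((a + b) * Real.sin (γ / 2)) ^ 2 ≤ c ^ 2 := by
    have : ((a + b) * Real.sin (γ / 2)) ^ 2 = (a + b) ^ 2 * ((1 - Real.cos γ) / 2) := by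
      rw [mul_pow, hhalf]
    rw [this]
    nlinarith [sq_nonneg (a - b), sq_nonneg (a + b)]
  exact (abs_le_of_sq_le_sq' hkey hc).2
end
end

section
/- Let K be the Vietoris–Rips complex at scale β of a finite point set S ⊂ ℝ² under the Euclidean metric. If edges [AB], [CD] ∈ K have intersecting segments AB ∩ CD ≠ ∅, and E ∈ {A,B,C,D} is a point among the four vertices closest (in Euclidean distance) to the intersection point, then [ABE] and [CDE] are both simplices of K; i.e., the Euclidean Vietoris–Rips complex of a planar point set satisfies condition (A) of the shadow path lifting condition. -/
open Set Metric
open scoped ENNReal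

noncomputable section

/-- **Euclidean Rips complexes satisfy lifting condition (A).** Let `K` be the Vietoris–Rips
complex at scale `β` of a finite planar point set `S` under the Euclidean metric. If
`[AB], [CD] ∈ K` (i.e. `A,B,C,D ∈ S` with `dist A B < β` and `dist C D < β`), the segments
`AB` and `CD` meet at a point `v`, and `E ∈ {A,B,C,D}` is closest to `v` among the four
vertices, then `[ABE]` and `[CDE]` are simplices of `K`: the sets `{A,B,E}` and `{C,D,E}`
both have Euclidean diameter `< β`. -/
theorem euclidean_rips_lifting (S : Finset (Euc 2)) (β : ℝ)
    (A B C D E v : Euc 2)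
    (hA : A ∈ S) (hB : B ∈ S) (hC : C ∈ S) (hD : D ∈ S)
    (hAB : dist A B < β) (hCD : dist C D < β)
    (hv : v ∈ segment ℝ A B ∩ segment ℝ C D)
    (hE : E ∈ ({A, B, C, D} : Set (Euc 2)))
    (hmin : ∀ X ∈ ({A, B, C, D} : Set (Euc 2)), dist E v ≤ dist X v) :
    dist A E < β ∧ dist B E < β ∧ dist C E < β ∧ dist D E < β := by
  obtain ⟨hv1, hv2⟩ := hv
  have h1 : dist A v + dist v B = dist A B := dist_add_dist_of_mem_segment hv1
  have h2 : dist C v + dist v D = dist C D := dist_add_dist_of_mem_segment hv2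
  have hmA : dist E v ≤ dist A v := hmin A (by simp)
  have hmB : dist E v ≤ dist B v := hmin B (by simp)
  have hmC : dist E v ≤ dist C v := hmin C (by simp)
  have hmD : dist E v ≤ dist D v := hmin D (by simp)
  have tAE : dist A E ≤ dist A v + dist v E := dist_triangle A v E
  have tBE : dist B E ≤ dist B v + dist v E := dist_triangle B v E
  have tCE : dist C E ≤ dist C v + dist v E := dist_triangle C v E
  have tDE : dist D E ≤ dist D v + dist v E := dist_triangle D v E
  have sAv : dist A v = dist v A := dist_comm A v
  have sBv : dist B v = dist v B := dist_comm B v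
  have sCv : dist C v = dist v C := dist_comm C v
  have sDv : dist D v = dist v D := dist_comm D v
  have sEv : dist E v = dist v E := dist_comm E v
  have hβ : (0:ℝ) < β := lt_of_le_of_lt dist_nonneg hAB
  rcases hE with rfl | rfl | rfl | rfl
  · refine ⟨by simpa using hβ, by rwa [dist_comm], ?_, ?_⟩ <;> linarith
  · refine ⟨hAB, by simpa using hβ, ?_, ?_⟩ <;> linarith
  · refine ⟨?_, ?_, by simpa using hβ, by rwa [dist_comm]⟩ <;> linarith
  · refine ⟨?_, ?_, hCD, by simpa using hβ⟩ <;> linarith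
end
end
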